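/- Let D be a positive integer, let m ≥ k ≥ 1 be integers, let r_1, …, r_m be pairwise distinct nonzero reals, and let f : ℝ → ℝ^D be (m+1)-times continuously differentiable with ‖f^{(m+1)}‖ ≤ M everywhere. Suppose a ∈ ℝ^m satisfies the linear system Σ_{j=1}^m a_j · r_j^i / i! = δ_{ik} for every i ∈ {1, …, m} (where δ_{ik} = 1 if i = k and 0 otherwise). Then for every t ∈ ℝ and every h ≠ 0, ‖ h^{−k} Σ_{j=1}^m a_j (f(t + r_j h) − f(t)) − f^{(k)}(t) ‖ ≤ (Σ_{j=1}^m |a_j| |r_j|^{m+1}) · M · |h|^{m−k+1}/(m+1)!. That is, the m-th Taylor-difference estimate of the k-th derivative converges with order m − k + 1 in h. -/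

import Mathlib

variable {E : Type*} [NormedAddCommGroup E] [NormedSpace ℝ E]

/-- One-sided then two-sided: if `F t = 0` and `‖F' x‖ ≤ C * |x-t|^p` then
`‖F x‖ ≤ C * |x-t|^(p+1) / (p+1)`. -/
lemma mono_bound_right (F F' : ℝ → E) (hF : ∀ x, HasDerivAt F (F' x) x)
    (t : ℝ) (hFt : F t = 0) (C : ℝ) (p : ℕ)
    (hbound : ∀ x, ‖F' x‖ ≤ C * |x - t| ^ p) :
    ∀ x, t ≤ x → ‖F x‖ ≤ C * |x - t| ^ (p + 1) / (p + 1) := by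
  intro x hx
  set B : ℝ → ℝ := fun y => C * (y - t) ^ (p + 1) / (p + 1) with hBdef
  have hB : ∀ y, HasDerivAt B (C * (y - t) ^ p) y := by
    intro y
    have h1 : HasDerivAt (fun y : ℝ => (y - t) ^ (p + 1))
        ((p + 1 : ℕ) * (y - t) ^ p * 1) y :=
      (((hasDerivAt_id y).sub_const t).pow (p + 1))
    have := (h1.const_mul C).div_const (p + 1 : ℝ)
    refine this.congr_deriv ?_
    push_cast
    rw [div_eq_iff (by positivity)]
    ring
  have key := image_norm_le_of_norm_deriv_right_le_deriv_boundary
    (B := B) (B' := fun y => C * (y - t) ^ p)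
    (fun y _ => (hF y).continuousAt.continuousWithinAt)
    (fun y _ => (hF y).hasDerivWithinAt.mono (Set.Ici_subset_Ici.mpr le_rfl) |>.mono
      (by intro z hz; exact hz))
    (a := t) (b := x)
    (by simp [hFt, hBdef]) hB
    (fun y hy => by
      have := hbound y
      rwa [abs_of_nonneg (sub_nonneg.2 hy.1)] at this)
  have := key (Set.right_mem_Icc.2 hx)
  simp only [hBdef] at this
  rwa [abs_of_nonneg (sub_nonneg.2 hx)]

lemma mono_bound (F F' : ℝ → E) (hF : ∀ x, HasDerivAt F (F' x) x)
    (t : ℝ) (hFt : F t = 0) (C : ℝ) (p : ℕ)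
    (hbound : ∀ x, ‖F' x‖ ≤ C * |x - t| ^ p) :
    ∀ x, ‖F x‖ ≤ C * |x - t| ^ (p + 1) / (p + 1) := by
  intro x
  rcases le_total t x with hx | hx
  · exact mono_bound_right F F' hF t hFt C p hbound x hx
  · -- reflect
    set G : ℝ → E := fun y => F (2 * t - y) with hGdef
    have hG : ∀ y, HasDerivAt G (-F' (2 * t - y)) y := by
      intro y
      have h1 : HasDerivAt (fun y : ℝ => 2 * t - y) (-1) y := by
        simpa using (hasDerivAt_id' y).const_sub (2*t)
      have := (hF (2 * t - y)).scomp y h1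
      exact this.congr_deriv (by simp)
    have hGt : G t = 0 := by simp [hGdef, two_mul, hFt]
    have hGb : ∀ y, ‖(-F' (2 * t - y) : E)‖ ≤ C * |y - t| ^ p := by
      intro y
      rw [norm_neg]
      have := hbound (2 * t - y)
      have h2 : |2 * t - y - t| = |y - t| := by
        rw [show (2 * t - y - t) = -(y - t) by ring, abs_neg]
      rwa [h2] at this
    have := mono_bound_right G (fun y => -F' (2 * t - y)) hG t hGt C p hGb
      (2 * t - x) (by linarith)
    have h2 : |2 * t - x - t| = |x - t| := by
      rw [show (2 * t - x - t) = -(x - t) by ring, abs_neg]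
    have h3 : G (2 * t - x) = F x := by
      simp only [hGdef]; congr 1; ring
    rwa [h3, h2] at this

lemma taylor_sharp : ∀ (n : ℕ) (f : ℝ → E), ContDiff ℝ (n + 1 : ℕ) f →
    ∀ (M : ℝ), (∀ u, ‖iteratedDeriv (n + 1) f u‖ ≤ M) → ∀ (t x : ℝ),
    ‖f x - ∑ i ∈ Finset.range (n + 1),
        ((x - t) ^ i / (i.factorial : ℝ)) • iteratedDeriv i f t‖ ≤
      M * |x - t| ^ (n + 1) / ((n + 1).factorial : ℝ) := by
  intro n
  induction n with
  | zero =>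
    intro f hf M hM t x
    have hd : Differentiable ℝ f := hf.differentiable (by norm_num)
    have key := mono_bound (fun x => f x - f t) (fun x => deriv f x)
      (fun x => by simpa using (hd x).hasDerivAt.sub_const (f t))
      t (by simp) M 0
      (fun x => by simpa [iteratedDeriv_one] using hM x) x
    simpa [iteratedDeriv_zero] using key
  | succ n IH =>
    intro f hf M hM t x
    set g : ℝ → E := deriv f with hgdef
    have hf1 : Differentiable ℝ f := hf.differentiable (by norm_num)
    have hg : ContDiff ℝ (n + 1 : ℕ) g := by
      have := (contDiff_succ_iff_deriv (n := (n + 1 : ℕ))).mp (by exact_mod_cast hf)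
      exact this.2.2
    have hMg : ∀ u, ‖iteratedDeriv (n + 1) g u‖ ≤ M := by
      intro u
      rw [hgdef, ← iteratedDeriv_succ']
      exact hM u
    set F : ℝ → E := fun y => f y - ∑ i ∈ Finset.range (n + 2),
        ((y - t) ^ i / (i.factorial : ℝ)) • iteratedDeriv i f t with hFdef
    set F' : ℝ → E := fun y => g y - ∑ i ∈ Finset.range (n + 1),
        ((y - t) ^ i / (i.factorial : ℝ)) • iteratedDeriv i g t with hF'def
    have hder : ∀ y, HasDerivAt F (F' y) y := by
      intro y
      have hsum : HasDerivAt (fun y => ∑ i ∈ Finset.range (n + 2),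
          ((y - t) ^ i / (i.factorial : ℝ)) • iteratedDeriv i f t)
          (∑ i ∈ Finset.range (n + 2),
            ((i : ℝ) * (y - t) ^ (i - 1) * 1 / (i.factorial : ℝ)) • iteratedDeriv i f t) y := by
        apply HasDerivAt.fun_sum
        intro i _
        exact ((((hasDerivAt_id y).sub_const t).pow i).div_const
          (i.factorial : ℝ)).smul_const (iteratedDeriv i f t)
      have hshift : (∑ i ∈ Finset.range (n + 2),
            ((i : ℝ) * (y - t) ^ (i - 1) * 1 / (i.factorial : ℝ)) • iteratedDeriv i f t)
          = ∑ i ∈ Finset.range (n + 1),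
            ((y - t) ^ i / (i.factorial : ℝ)) • iteratedDeriv i g t := by
        rw [Finset.sum_range_succ']
        simp only [Nat.cast_zero, zero_mul, zero_div, zero_smul, add_zero]
        apply Finset.sum_congr rfl
        intro i _
        have h1 : iteratedDeriv (i + 1) f t = iteratedDeriv i g t := by
          rw [iteratedDeriv_succ']
        rw [h1]
        congr 1
        have : ((i + 1).factorial : ℝ) = (i + 1) * (i.factorial : ℝ) := by
          rw [Nat.factorial_succ]; push_cast; ring
        rw [this]
        have hfac : (i.factorial : ℝ) ≠ 0 := Nat.cast_ne_zero.2 i.factorial_ne_zero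
        field_simp
        rw [show i + 1 - 1 = i by omega]
        push_cast
        ring
      have := ((hf1 y).hasDerivAt.sub hsum)
      rw [hshift] at this
      exact this
    have hFt : F t = 0 := by
      simp only [hFdef]
      rw [Finset.sum_eq_single 0]
      · simp [iteratedDeriv_zero]
      · intro i _ hi
        simp [zero_pow hi]
      · intro h; simp at h
    have hfacpos : (0:ℝ) < ((n + 1).factorial : ℝ) := by positivity
    have hbound : ∀ y, ‖F' y‖ ≤ (M / ((n + 1).factorial : ℝ)) * |y - t| ^ (n + 1) := by
      intro y
      have := IH g hg M hMg t y
      calc ‖F' y‖ ≤ M * |y - t| ^ (n + 1) / ((n + 1).factorial : ℝ) := this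
        _ = (M / ((n + 1).factorial : ℝ)) * |y - t| ^ (n + 1) := by ring
    have key := mono_bound F F' hder t hFt (M / ((n + 1).factorial : ℝ)) (n + 1) hbound x
    refine key.trans_eq ?_
    have h2 : ((n + 1 + 1).factorial : ℝ) = (((n : ℕ) + 1 : ℕ) + 1 : ℝ) * ((n + 1).factorial : ℝ) := by
      rw [Nat.factorial_succ]; push_cast; ring
    rw [h2, div_mul_eq_mul_div, div_div]
    congr 1
    ring
section Main

/-- The `m`-th Taylor-difference estimate of the `k`-th derivative converges
with order `m - k + 1` in `h`. -/
theorem stmt_6 (D m k : ℕ) (hD : 0 < D) (hk : 1 ≤ k) (hkm : k ≤ m)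
    (r a : ℕ → ℝ) (M : ℝ)
    (hr0 : ∀ j ∈ Finset.Icc 1 m, r j ≠ 0)
    (hrdist : ∀ j ∈ Finset.Icc 1 m, ∀ j' ∈ Finset.Icc 1 m, j ≠ j' → r j ≠ r j')
    (f : ℝ → EuclideanSpace ℝ (Fin D))
    (hf : ContDiff ℝ (m + 1 : ℕ) f)
    (hM : ∀ u : ℝ, ‖iteratedDeriv (m + 1) f u‖ ≤ M)
    (ha : ∀ i ∈ Finset.Icc 1 m,
      ∑ j ∈ Finset.Icc 1 m, a j * r j ^ i / (i.factorial : ℝ) =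
        if i = k then 1 else 0) :
    ∀ (t h : ℝ), h ≠ 0 →
      ‖(h ^ k)⁻¹ • ∑ j ∈ Finset.Icc 1 m, a j • (f (t + r j * h) - f t) -
          iteratedDeriv k f t‖ ≤
        (∑ j ∈ Finset.Icc 1 m, |a j| * |r j| ^ (m + 1)) * M * |h| ^ (m - k + 1) /
          ((m + 1).factorial : ℝ) := by
  intro t h hh
  set S := Finset.Icc 1 m with hS
  set c : ℕ → EuclideanSpace ℝ (Fin D) := fun i => iteratedDeriv i f t with hc
  set R : ℕ → EuclideanSpace ℝ (Fin D) := fun j =>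
    f (t + r j * h) - ∑ i ∈ Finset.range (m + 1),
      ((r j * h) ^ i / (i.factorial : ℝ)) • c i with hR
  have hRbound : ∀ j, ‖R j‖ ≤ M * |r j * h| ^ (m + 1) / ((m + 1).factorial : ℝ) := by
    intro j
    have := taylor_sharp m f hf M hM t (t + r j * h)
    simpa [hR, hc] using this
  -- decompose each difference
  have hdiff : ∀ j, f (t + r j * h) - f t
      = (∑ i ∈ S, ((r j * h) ^ i / (i.factorial : ℝ)) • c i) + R j := by
    intro j
    have hsplit : ∑ i ∈ Finset.range (m + 1), ((r j * h) ^ i / (i.factorial : ℝ)) • c i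
        = f t + ∑ i ∈ S, ((r j * h) ^ i / (i.factorial : ℝ)) • c i := by
      rw [Finset.sum_range_succ']
      have h0 : ((r j * h) ^ 0 / ((0:ℕ).factorial : ℝ)) • c 0 = f t := by
        simp [hc, iteratedDeriv_zero]
      rw [h0]
      rw [hS, ← Finset.Ico_add_one_right_eq_Icc, Finset.sum_Ico_eq_sum_range]
      simp only [Nat.add_sub_cancel]
      rw [add_comm]
      congr 1
      apply Finset.sum_congr rfl
      intro i _
      rw [add_comm 1 i]
    rw [hR]
    simp only
    rw [hsplit]
    abel
  have hkey : ∑ j ∈ S, a j • (f (t + r j * h) - f t)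
      = (h ^ k) • c k + ∑ j ∈ S, a j • R j := by
    have h1 : ∑ j ∈ S, a j • (f (t + r j * h) - f t)
        = (∑ j ∈ S, a j • ∑ i ∈ S, ((r j * h) ^ i / (i.factorial : ℝ)) • c i)
          + ∑ j ∈ S, a j • R j := by
      rw [← Finset.sum_add_distrib]
      apply Finset.sum_congr rfl
      intro j _
      rw [hdiff j, smul_add]
    rw [h1]
    congr 1
    have h2 : ∑ j ∈ S, a j • ∑ i ∈ S, ((r j * h) ^ i / (i.factorial : ℝ)) • c i
        = ∑ i ∈ S, (∑ j ∈ S, a j * r j ^ i / (i.factorial : ℝ)) • (h ^ i • c i) := by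
      simp_rw [Finset.smul_sum]
      rw [Finset.sum_comm]
      apply Finset.sum_congr rfl
      intro i _
      calc ∑ x ∈ S, a x • ((r x * h) ^ i / (i.factorial : ℝ)) • c i
          = ∑ x ∈ S, (a x * r x ^ i / (i.factorial : ℝ) * h ^ i) • c i := by
            apply Finset.sum_congr rfl
            intro x _
            rw [smul_smul]
            congr 1
            rw [mul_pow]
            ring
        _ = (∑ x ∈ S, a x * r x ^ i / (i.factorial : ℝ) * h ^ i) • c i := by
            rw [← Finset.sum_smul]
        _ = ((∑ j ∈ S, a j * r j ^ i / (i.factorial : ℝ)) * h ^ i) • c i := by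
            rw [← Finset.sum_mul]
        _ = (∑ j ∈ S, a j * r j ^ i / (i.factorial : ℝ)) • (h ^ i • c i) := by
            rw [smul_smul]
    rw [h2]
    have h3 : ∑ i ∈ S, (∑ j ∈ S, a j * r j ^ i / (i.factorial : ℝ)) • (h ^ i • c i)
        = ∑ i ∈ S, (if i = k then (h ^ i • c i) else 0) := by
      apply Finset.sum_congr rfl
      intro i hi
      rw [ha i hi]
      split_ifs <;> simp
    rw [h3, Finset.sum_ite_eq' S k (fun i => h ^ i • c i)]
    have hkS : k ∈ S := Finset.mem_Icc.mpr ⟨hk, hkm⟩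
    simp [hkS]
  have hhk : (h : ℝ) ^ k ≠ 0 := pow_ne_zero k hh
  have hmain : (h ^ k)⁻¹ • ∑ j ∈ S, a j • (f (t + r j * h) - f t) - c k
      = (h ^ k)⁻¹ • ∑ j ∈ S, a j • R j := by
    rw [hkey, smul_add, inv_smul_smul₀ hhk]
    abel
  rw [show iteratedDeriv k f t = c k from rfl, hmain]
  -- norm estimate
  have hnorm : ‖(h ^ k)⁻¹ • ∑ j ∈ S, a j • R j‖
      ≤ (|h| ^ k)⁻¹ * ∑ j ∈ S, |a j| * (M * |r j * h| ^ (m + 1) / ((m + 1).factorial : ℝ)) := by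
    rw [norm_smul, norm_inv, norm_pow, Real.norm_eq_abs]
    gcongr
    refine (norm_sum_le _ _).trans ?_
    apply Finset.sum_le_sum
    intro j _
    rw [norm_smul, Real.norm_eq_abs]
    exact mul_le_mul_of_nonneg_left (hRbound j) (abs_nonneg _)
  refine hnorm.trans_eq ?_
  have hfac : (0:ℝ) < ((m + 1).factorial : ℝ) := by positivity
  have hhabs : |h| ≠ 0 := abs_ne_zero.mpr hh
  have hpow : |h| ^ (m - k + 1) = |h| ^ (m + 1) * (|h| ^ k)⁻¹ := by
    rw [show m - k + 1 = m + 1 - k by omega]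
    exact pow_sub₀ |h| hhabs (by omega)
  rw [Finset.mul_sum, Finset.sum_mul, Finset.sum_mul, Finset.sum_div]
  apply Finset.sum_congr rfl
  intro j _
  rw [abs_mul, mul_pow, hpow]
  field_simp
end Main
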